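/- For every t ∈ ℝ with |t| ≥ 3/2, there exists s ∈ Spec(t) with |s| ≤ 1/2. (Thus the smallest magnetic Dirac eigenvalue of the round 3-sphere in absolute value satisfies |λ^{tη}| ≤ 1/2 for all |t| ≥ 3/2, and the equality case of the magnetic Hijazi inequality |λ₁^{tη}| + |t| = 3/2 fails for |t| > 3/2.) -/
import Mathlib


/-- `f₀(k,p,t) = (1 + t + 2p − k)² + 4(k − p)(p + 1)`. -/
noncomputable def f0 (k p : ℤ) (t : ℝ) : ℝ :=
  (1 + t + 2 * (p : ℝ) - (k : ℝ)) ^ 2 + 4 * ((k : ℝ) - (p : ℝ)) * ((p : ℝ) + 1)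

/-- The spectrum of the magnetic Dirac operator `D^{tη}` on the round 3-sphere of
sectional curvature 1, where `η` is the Reeb one-form of the Hopf fibration. -/
noncomputable def Spec (t : ℝ) : Set ℝ :=
  {s | ∃ k : ℕ, s = 3 / 2 + (k : ℝ) + t} ∪
    {s | ∃ k : ℕ, s = 3 / 2 + (k : ℝ) - t} ∪
    {s | ∃ k p : ℕ, p < k ∧ s = 1 / 2 + Real.sqrt (f0 (k : ℤ) (p : ℤ) t)} ∪
    {s | ∃ k p : ℕ, p < k ∧ s = 1 / 2 - Real.sqrt (f0 (k : ℤ) (p : ℤ) t)}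

/-- For every `t` with `|t| ≥ 3/2` there exists `s ∈ Spec t` with `|s| ≤ 1/2`. -/
theorem stmt12 (t : ℝ) (ht : 3 / 2 ≤ |t|) : ∃ s ∈ Spec t, |s| ≤ 1 / 2 := by
  rcases le_or_gt 0 t with h0 | h0
  · rw [abs_of_nonneg h0] at ht
    set k : ℕ := ⌊t - 1⌋₊ with hk
    have h1 : (k : ℝ) ≤ t - 1 := Nat.floor_le (by linarith)
    have h2 : t - 1 < (k : ℝ) + 1 := Nat.lt_floor_add_one _
    refine ⟨3 / 2 + (k : ℝ) - t, Or.inl (Or.inl (Or.inr ⟨k, rfl⟩)), ?_⟩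
    rw [abs_le]; constructor <;> linarith
  · rw [abs_of_neg h0] at ht
    set k : ℕ := ⌊-t - 1⌋₊ with hk
    have h1 : (k : ℝ) ≤ -t - 1 := Nat.floor_le (by linarith)
    have h2 : -t - 1 < (k : ℝ) + 1 := Nat.lt_floor_add_one _
    refine ⟨3 / 2 + (k : ℝ) + t, Or.inl (Or.inl (Or.inl ⟨k, rfl⟩)), ?_⟩
    rw [abs_le]; constructor <;> linarith
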